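/- Let V be a finite-dimensional complex vector space, B a nondegenerate symmetric bilinear form on V, and so(B) = {A ∈ End(V) : B(Ax,y) + B(x,Ay) = 0 for all x,y}. Let 𝔤 ⊆ so(B) be a Lie subalgebra that acts irreducibly on V. Then every skew-curvature tensor of type 𝔤 ⊕ ℂ·id_V takes values in 𝔤, i.e. 𝓡̄(𝔤 ⊕ ℂ·id_V) = 𝓡̄(𝔤). In particular, 𝔤 ⊕ ℂ·id_V is not a skew-Berger algebra. -/

import Mathlib

/-- A skew-curvature tensor of type `h`. -/
def IsSkewCurv {V : Type*} [AddCommGroup V] [Module ℂ V]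
    (h : Submodule ℂ (Module.End ℂ V)) (R : V →ₗ[ℂ] V →ₗ[ℂ] Module.End ℂ V) : Prop :=
  (∀ x y, R x y = R y x) ∧ (∀ x y, R x y ∈ h) ∧
  (∀ x y z, R x y z + R y z x + R z x y = 0)

/-- `h` is a skew-Berger algebra: it is spanned by the images of its
skew-curvature tensors. -/
def IsSkewBerger {V : Type*} [AddCommGroup V] [Module ℂ V]
    (h : Submodule ℂ (Module.End ℂ V)) : Prop :=
  h = Submodule.span ℂ
    {T | ∃ R : V →ₗ[ℂ] V →ₗ[ℂ] Module.End ℂ V,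
      IsSkewCurv h R ∧ ∃ x y : V, T = R x y}

attribute [local instance] LieRing.ofAssociativeRing

/-- if `𝔤 ⊆ so(B)` is an irreducible subalgebra of the orthogonal Lie
algebra of a nondegenerate symmetric form `B` on a finite-dimensional complex vector
space, then every skew-curvature tensor of type `𝔤 ⊕ ℂ·id` takes values in `𝔤`;
in particular `𝔤 ⊕ ℂ·id` is not a skew-Berger algebra. -/
theorem stmt2 {V : Type*} [AddCommGroup V] [Module ℂ V] [FiniteDimensional ℂ V]
    [Nontrivial V]
    (B : V →ₗ[ℂ] V →ₗ[ℂ] ℂ)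
    (hBsymm : ∀ x y : V, B x y = B y x)
    (hBnd : ∀ x : V, (∀ y : V, B x y = 0) → x = 0)
    (g : LieSubalgebra ℂ (Module.End ℂ V))
    (hgso : ∀ A ∈ g, ∀ x y : V, B (A x) y + B x (A y) = 0)
    (hirr : ∀ W : Submodule ℂ V, (∀ A ∈ g, ∀ w ∈ W, A w ∈ W) → W = ⊥ ∨ W = ⊤)
    (gext : Submodule ℂ (Module.End ℂ V))
    (hgext : gext = g.toSubmodule ⊔ (ℂ ∙ (1 : Module.End ℂ V))) :
    (∀ R : V →ₗ[ℂ] V →ₗ[ℂ] Module.End ℂ V,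
      IsSkewCurv gext R → ∀ x y : V, R x y ∈ g) ∧
    ¬ IsSkewBerger gext := by
  obtain ⟨x0, hx0ne⟩ := exists_ne (0 : V)
  have hB0 : ¬ ∀ x y : V, B x y = 0 := fun h => hx0ne (hBnd x0 (fun y => h x0 y))
  have hone : (1 : Module.End ℂ V) ∉ g := by
    intro h1
    apply hB0; intro x y
    have h := hgso 1 h1 x y
    simp only [Module.End.one_apply] at h
    linear_combination h / 2
  have hz0 : ∃ z : V, B z z ≠ 0 := by
    by_contra h
    push_neg at h
    apply hB0
    intro x y
    have h1 := h (x + y); have h2 := h x; have h3 := h y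
    have h4 := hBsymm x y
    simp only [map_add, LinearMap.add_apply] at h1
    linear_combination (h1 - h2 - h3 + h4) / 2
  obtain ⟨z0, hz0⟩ := hz0
  have main : ∀ R : V →ₗ[ℂ] V →ₗ[ℂ] Module.End ℂ V,
      IsSkewCurv gext R → ∀ x y : V, R x y ∈ g := by
    intro R hR
    obtain ⟨hsym, hmem, hbia⟩ := hR
    have hex : ∀ x y : V, ∃ c : ℂ, R x y - c • (1 : Module.End ℂ V) ∈ g.toSubmodule := by
      intro x y
      have h := hmem x y
      rw [hgext] at h
      rcases Submodule.mem_sup.mp h with ⟨a, ha, b, hb, hab⟩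
      rcases Submodule.mem_span_singleton.mp hb with ⟨c, rfl⟩
      refine ⟨c, ?_⟩
      have : R x y - c • (1 : Module.End ℂ V) = a := by rw [← hab]; abel
      rwa [this]
    choose lam hlam using hex
    have hlamsymm : ∀ x y, lam x y = lam y x := by
      intro x y
      by_contra hne
      have h1 := hlam x y
      have h2 := hlam y x
      rw [← hsym x y] at h2
      have hd : (R x y - lam y x • 1) - (R x y - lam x y • 1)
          = (lam x y - lam y x) • (1 : Module.End ℂ V) := by
        rw [sub_smul]; abel
      have hm : (lam x y - lam y x) • (1 : Module.End ℂ V) ∈ g.toSubmodule := by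
        rw [← hd]; exact sub_mem h2 h1
      have h3 : (1 : Module.End ℂ V) ∈ g.toSubmodule := by
        have h4 := Submodule.smul_mem _ (lam x y - lam y x)⁻¹ hm
        rwa [smul_smul, inv_mul_cancel₀ (sub_ne_zero.mpr hne), one_smul] at h4
      exact hone h3
    have hii : ∀ x y z w : V,
        B (R x y z) w + B (R x y w) z = 2 * lam x y * B z w := by
      intro x y z w
      have hA := hlam x y
      have h1 := hgso _ hA z w
      have e1 : (R x y - lam x y • 1) z = R x y z - lam x y • z := by simp
      have e2 : (R x y - lam x y • 1) w = R x y w - lam x y • w := by simp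
      rw [e1, e2] at h1
      simp only [map_sub, map_smul, LinearMap.sub_apply, LinearMap.smul_apply,
        smul_eq_mul] at h1
      linear_combination h1 + hBsymm (R x y w) z + lam x y * (hBsymm z w) - lam x y * (hBsymm z w)
    have hiii : ∀ x y z w : V,
        B (R x y z) w + B (R y z x) w + B (R z x y) w = 0 := by
      intro x y z w
      have h := hbia x y z
      have h2 := congrArg (fun v => B v w) h
      simpa [map_add] using h2
    have hqe : ∀ x y z w : V, B (R x y z) w = B (R y x z) w := by
      intro x y z w; rw [hsym x y]
    have key : ∀ x y z w : V,
        lam x y * B z w + lam z w * B x y + lam w y * B z x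
        + lam x w * B z y + lam y z * B x w + lam z x * B y w = 0 := by
      intro x y z w
      linear_combination ((hiii x y z w) - (hii y z x w) - (hii z x y w)
        + (hiii y z w x) + (hiii z x w y) - (hii z w x y) - (hii w y z x)
        - (hii x w z y) + (hiii y w x z) - (hii x y z w)
        - (hqe w z x y) - (hqe y w x z) - (hqe w x y z)) / 2
    have k1 : lam z0 z0 = 0 := by
      have h3 : lam z0 z0 * B z0 z0 = 0 := by
        linear_combination (key z0 z0 z0 z0) / 6
      exact (mul_eq_zero.mp h3).resolve_right hz0
    have k2 : ∀ x, lam x z0 = 0 := by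
      intro x
      have h3 : lam x z0 * B z0 z0 = 0 := by
        linear_combination (key x z0 z0 z0) / 3
          - ((2 * (B x z0) + B z0 x) / 3) * k1 - ((B z0 z0) / 3) * (hlamsymm z0 x)
      exact (mul_eq_zero.mp h3).resolve_right hz0
    have k3 : ∀ x y, lam x y = 0 := by
      intro x y
      have h3 : lam x y * B z0 z0 = 0 := by
        linear_combination (key x y z0 z0) - (B x y) * k1
          - (B z0 x) * (hlamsymm z0 y) - (B z0 x) * (k2 y)
          - (B z0 y) * (k2 x) - (B x z0) * (k2 y)
          - (B y z0) * (hlamsymm z0 x) - (B y z0) * (k2 x)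
      exact (mul_eq_zero.mp h3).resolve_right hz0
    intro x y
    have h := hlam x y
    rw [k3 x y] at h
    simpa using h
  refine ⟨main, ?_⟩
  intro hSB
  have h1mem : (1 : Module.End ℂ V) ∈ gext := by
    rw [hgext]
    exact Submodule.mem_sup_right (Submodule.mem_span_singleton_self _)
  rw [hSB] at h1mem
  have hle : Submodule.span ℂ
      {T | ∃ R : V →ₗ[ℂ] V →ₗ[ℂ] Module.End ℂ V,
        IsSkewCurv gext R ∧ ∃ x y : V, T = R x y} ≤ g.toSubmodule := by
    rw [Submodule.span_le]
    rintro T ⟨R, hR, x, y, rfl⟩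
    exact main R hR x y
  exact hone (hle h1mem)
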